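/- arXiv:2303.16713 — 3 statements merged into one kernel-verified Lean document; each statement's English description precedes it below -/
import Mathlib

section
/- Let $f\colon\mathbb{R}\to\mathbb{R}$ be the continuous $2$-periodic function with $f(x)=|x|$ for $x\in[-1,1]$. Then for $x\in[0,1]$, the Hardy–Littlewood maximal function of $f$ is given by $Mf(x)=2-\sqrt{x^{2}+2}$ if $0\leq x\leq \tfrac12$ and $Mf(x)=x$ if $\tfrac12<x\leq 1$. -/
open MeasureTheory Metric Set Filter

noncomputable def holderSemi {X : Type*} [MetricSpace X] (α : X → ℝ) (f : X → ℝ) : ℝ :=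
  ⨆ p : {p : X × X // p.1 ≠ p.2}, |f p.1.1 - f p.1.2| / dist p.1.1 p.1.2 ^ α p.1.1

noncomputable def holderNorm {X : Type*} [MetricSpace X] (α : X → ℝ) (f : X → ℝ) : ℝ :=
  (⨆ x, |f x|) + holderSemi α f

def MemVarHolder {X : Type*} [MetricSpace X] (α : X → ℝ) (f : X → ℝ) : Prop :=
  Continuous f ∧ BddAbove (Set.range fun x => |f x|) ∧
    BddAbove (Set.range fun p : {p : X × X // p.1 ≠ p.2} =>
      |f p.1.1 - f p.1.2| / dist p.1.1 p.1.2 ^ α p.1.1)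

noncomputable def maxFunR (f : ℝ → ℝ) (x : ℝ) : ℝ :=
  ⨆ r : {r : ℝ // 0 < r}, (1 / (2 * r.1)) * ∫ t in x - r.1..x + r.1, |f t|

lemma int_lin (a b c d : ℝ) : ∫ t in a..b, (c*t + d) = c*(b^2-a^2)/2 + d*(b-a) := by
  rw [intervalIntegral.integral_add ((intervalIntegral.intervalIntegrable_id).const_mul c) (intervalIntegrable_const),
    intervalIntegral.integral_const_mul, integral_id, intervalIntegral.integral_const]
  simp [smul_eq_mul]; ring

variable {f : ℝ → ℝ}

lemma pa_int_eq (p q c d : ℝ) (hpq : p ≤ q)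
    (hfe : ∀ t ∈ Icc p q, f t = c*t + d) :
    ∫ t in p..q, f t = c*(q^2-p^2)/2 + d*(q-p) := by
  rw [intervalIntegral.integral_congr (g := fun t => c*t+d)
    (by rw [uIcc_of_le hpq]; intro t ht; exact hfe t ht)]
  exact int_lin p q c d

lemma pa_m10 (hval : ∀ x ∈ Set.Icc (-1 : ℝ) 1, f x = |x|) :
    ∀ t ∈ Icc (-1:ℝ) 0, f t = (-1)*t + 0 := by
  intro t ht
  rw [hval t ⟨ht.1, by linarith [ht.2]⟩, abs_of_nonpos ht.2]; ring

lemma pa_01 (hval : ∀ x ∈ Set.Icc (-1 : ℝ) 1, f x = |x|) :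
    ∀ t ∈ Icc (0:ℝ) 1, f t = 1*t + 0 := by
  intro t ht
  rw [hval t ⟨by linarith [ht.1], ht.2⟩, abs_of_nonneg ht.1]; ring

lemma pa_m2 (hper : ∀ t, f (t + 2) = f t) (hval : ∀ x ∈ Set.Icc (-1 : ℝ) 1, f x = |x|) :
    ∀ t ∈ Icc (-2:ℝ) (-1), f t = 1*t + 2 := by
  intro t ht
  rw [← hper t, hval (t+2) ⟨by linarith [ht.1], by linarith [ht.2]⟩,
    abs_of_nonneg (by linarith [ht.1])]; ring

lemma pa_12 (hper : ∀ t, f (t + 2) = f t) (hval : ∀ x ∈ Set.Icc (-1 : ℝ) 1, f x = |x|) :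
    ∀ t ∈ Icc (1:ℝ) 2, f t = (-1)*t + 2 := by
  intro t ht
  have h := hper (t-2)
  rw [show t - 2 + 2 = t by ring] at h
  rw [h, hval (t-2) ⟨by linarith [ht.1], by linarith [ht.2]⟩,
    abs_of_nonpos (by linarith [ht.2])]; ring

lemma pa_23 (hper : ∀ t, f (t + 2) = f t) (hval : ∀ x ∈ Set.Icc (-1 : ℝ) 1, f x = |x|) :
    ∀ t ∈ Icc (2:ℝ) 3, f t = 1*t + (-2) := by
  intro t ht
  have h := hper (t-2)
  rw [show t - 2 + 2 = t by ring] at h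
  rw [h, hval (t-2) ⟨by linarith [ht.1], by linarith [ht.2]⟩,
    abs_of_nonneg (by linarith [ht.1])]; ring

lemma pa_nonneg (hper : ∀ t, f (t + 2) = f t) (hval : ∀ x ∈ Set.Icc (-1 : ℝ) 1, f x = |x|) :
    ∀ t, 0 ≤ f t := by
  intro t
  have hP : Function.Periodic f 2 := hper
  have h := hP.sub_int_mul_eq (x := t) (round (t/2))
  have hb := abs_sub_round (t/2)
  rw [abs_le] at hb
  rw [← h, hval (t - (round (t/2) : ℝ) * 2) ⟨by linarith [hb.1], by linarith [hb.2]⟩]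
  exact abs_nonneg _

lemma pa_period_int (hf : Continuous f) (hper : ∀ t, f (t + 2) = f t)
    (hval : ∀ x ∈ Set.Icc (-1 : ℝ) 1, f x = |x|) (c : ℝ) :
    ∫ t in c..c+2, f t = 1 := by
  have hP : Function.Periodic f 2 := hper
  rw [hP.intervalIntegral_add_eq c (-1)]
  have hInt : ∀ a b : ℝ, IntervalIntegrable f volume a b := fun a b => hf.intervalIntegrable a b
  have e := intervalIntegral.integral_add_adjacent_intervals (hInt (-1) 0) (hInt 0 1)
  have v1 := pa_int_eq (-1) 0 (-1) 0 (by norm_num) (pa_m10 hval)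
  have v2 := pa_int_eq 0 1 1 0 (by norm_num) (pa_01 hval)
  rw [show (-1:ℝ)+2 = 1 by ring, ← e, v1, v2]; norm_num

lemma pa_step (hf : Continuous f) (hper : ∀ t, f (t + 2) = f t)
    (hval : ∀ x ∈ Set.Icc (-1 : ℝ) 1, f x = |x|) (a b : ℝ) :
    ∫ t in (a-2)..(b+2), f t = (∫ t in a..b, f t) + 2 := by
  have hInt : ∀ a b : ℝ, IntervalIntegrable f volume a b := fun a b => hf.intervalIntegrable a b
  have e1 := intervalIntegral.integral_add_adjacent_intervals (hInt (a-2) a) (hInt a (b+2))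
  have e2 := intervalIntegral.integral_add_adjacent_intervals (hInt a b) (hInt b (b+2))
  have p1 : ∫ t in (a-2)..a, f t = 1 := by
    have := pa_period_int hf hper hval (a-2); rwa [show a-2+2 = a by ring] at this
  have p2 : ∫ t in b..(b+2), f t = 1 := pa_period_int hf hper hval b
  linarith

set_option maxHeartbeats 2000000 in
lemma pa_ub1 (hf : Continuous f) (hper : ∀ t, f (t + 2) = f t)
    (hval : ∀ x ∈ Set.Icc (-1 : ℝ) 1, f x = |x|) (x r : ℝ)
    (hx0 : 0 ≤ x) (hx : x ≤ 1/2) (hr0 : 0 < r) (hr2 : r ≤ 2) :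
    ∫ t in x-r..x+r, f t ≤ 2*r*(2 - Real.sqrt (x^2+2)) := by
  have hInt : ∀ a b : ℝ, IntervalIntegrable f volume a b := fun a b => hf.intervalIntegrable a b
  set s := Real.sqrt (x^2+2) with hs
  have hs0 : 0 ≤ s := Real.sqrt_nonneg _
  have hs2 : s^2 = x^2+2 := Real.sq_sqrt (by positivity)
  have hs32 : s ≤ 3/2 := by nlinarith
  have hs1 : 1+x ≤ s := by nlinarith
  have hs2x : s ≤ 2 - x := by nlinarith
  rcases le_total (x - r) (-1) with ha | ha
  · rcases le_total (x + r) 2 with hb | hb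
    · have hb1 : (1:ℝ) ≤ x + r := by nlinarith
      have e1 := intervalIntegral.integral_add_adjacent_intervals (hInt (x-r) (-1)) (hInt (-1) (x+r))
      have e2 := intervalIntegral.integral_add_adjacent_intervals (hInt (-1) 0) (hInt 0 (x+r))
      have e3 := intervalIntegral.integral_add_adjacent_intervals (hInt 0 1) (hInt 1 (x+r))
      have v1 := pa_int_eq (x-r) (-1) 1 2 ha
        (fun t ht => pa_m2 hper hval t ⟨by linarith [ht.1], ht.2⟩)
      have v2 := pa_int_eq (-1) 0 (-1) 0 (by norm_num) (pa_m10 hval)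
      have v3 := pa_int_eq 0 1 1 0 (by norm_num) (pa_01 hval)
      have v4 := pa_int_eq 1 (x+r) (-1) 2 hb1
        (fun t ht => pa_12 hper hval t ⟨ht.1, by linarith [ht.2]⟩)
      have hI : ∫ t in x-r..x+r, f t = 2 - x^2 - (r-2)^2 := by
        rw [← e1, ← e2, ← e3, v1, v2, v3, v4]; ring
      rw [hI]; nlinarith [sq_nonneg (s - r)]
    · have e1 := intervalIntegral.integral_add_adjacent_intervals (hInt (x-r) (-1)) (hInt (-1) (x+r))
      have e2 := intervalIntegral.integral_add_adjacent_intervals (hInt (-1) 0) (hInt 0 (x+r))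
      have e3 := intervalIntegral.integral_add_adjacent_intervals (hInt 0 1) (hInt 1 (x+r))
      have e4 := intervalIntegral.integral_add_adjacent_intervals (hInt 1 2) (hInt 2 (x+r))
      have v1 := pa_int_eq (x-r) (-1) 1 2 ha
        (fun t ht => pa_m2 hper hval t ⟨by linarith [ht.1], ht.2⟩)
      have v2 := pa_int_eq (-1) 0 (-1) 0 (by norm_num) (pa_m10 hval)
      have v3 := pa_int_eq 0 1 1 0 (by norm_num) (pa_01 hval)
      have v4 := pa_int_eq 1 2 (-1) 2 (by norm_num) (pa_12 hper hval)
      have v5 := pa_int_eq 2 (x+r) 1 (-2) hb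
        (fun t ht => pa_23 hper hval t ⟨ht.1, by linarith [ht.2]⟩)
      have hI : ∫ t in x-r..x+r, f t = 2 + 2*x*(r-2) := by
        rw [← e1, ← e2, ← e3, ← e4, v1, v2, v3, v4, v5]; ring
      have key : (2-x)*s ≤ x^2-2*x+3 := by nlinarith [sq_nonneg ((2-x) - s)]
      have key2 : (0:ℝ) ≤ (r - (2-x))*((2-x) - s) :=
        mul_nonneg (by linarith) (by linarith)
      rw [hI]; nlinarith [key, key2]
  · have hb2 : x + r ≤ 2 := by linarith
    rcases le_total (x + r) 1 with hb | hb
    · rcases le_total 0 (x - r) with hc | hc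
      · have hI := pa_int_eq (x-r) (x+r) 1 0 (by linarith)
          (fun t ht => pa_01 hval t ⟨by linarith [ht.1], by linarith [ht.2]⟩)
        rw [hI]; nlinarith [mul_nonneg hr0.le (by linarith : (0:ℝ) ≤ 3/2 - s)]
      · have e1 := intervalIntegral.integral_add_adjacent_intervals (hInt (x-r) 0) (hInt 0 (x+r))
        have v1 := pa_int_eq (x-r) 0 (-1) 0 hc
          (fun t ht => pa_m10 hval t ⟨by linarith [ht.1], ht.2⟩)
        have v2 := pa_int_eq 0 (x+r) 1 0 (by linarith)
          (fun t ht => pa_01 hval t ⟨ht.1, by linarith [ht.2]⟩)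
        have hI : ∫ t in x-r..x+r, f t = x^2 + r^2 := by
          rw [← e1, v1, v2]; ring
        rw [hI]
        nlinarith [mul_nonneg hr0.le (by linarith : (0:ℝ) ≤ 3/2 - s),
          mul_nonneg (by linarith : (0:ℝ) ≤ r - x) (by linarith : (0:ℝ) ≤ (1-x) - r),
          mul_nonneg hx0 (by linarith : (0:ℝ) ≤ 1 - 2*x)]
    · rcases le_total 0 (x - r) with hc | hc
      · have hx' : x = 1/2 := by linarith
        have hr' : r = 1/2 := by linarith
        have e0 : x - r = 0 := by rw [hx', hr']; norm_num
        have e1 : x + r = 1 := by rw [hx', hr']; norm_num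
        rw [e0, e1]
        have v := pa_int_eq 0 1 1 0 (by norm_num) (pa_01 hval)
        rw [v, hr']; nlinarith
      · have e1 := intervalIntegral.integral_add_adjacent_intervals (hInt (x-r) 0) (hInt 0 (x+r))
        have e2 := intervalIntegral.integral_add_adjacent_intervals (hInt 0 1) (hInt 1 (x+r))
        have v1 := pa_int_eq (x-r) 0 (-1) 0 hc
          (fun t ht => pa_m10 hval t ⟨by linarith [ht.1], ht.2⟩)
        have v2 := pa_int_eq 0 1 1 0 (by norm_num) (pa_01 hval)
        have v3 := pa_int_eq 1 (x+r) (-1) 2 hb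
          (fun t ht => pa_12 hper hval t ⟨ht.1, by linarith [ht.2]⟩)
        have hI : ∫ t in x-r..x+r, f t = 1 + 2*(x-1)*(1-r) := by
          rw [← e1, ← e2, v1, v2, v3]; ring
        have key : (2+2*x)*s ≤ 2*x^2+2*x+3 := by nlinarith [sq_nonneg ((1+x) - s)]
        have key2 : (0:ℝ) ≤ (1+x-r)*(s-(1+x)) :=
          mul_nonneg (by linarith) (by linarith)
        rw [hI]; nlinarith [key, key2]

set_option maxHeartbeats 2000000 in
lemma pa_ub2 (hf : Continuous f) (hper : ∀ t, f (t + 2) = f t)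
    (hval : ∀ x ∈ Set.Icc (-1 : ℝ) 1, f x = |x|) (x r : ℝ)
    (hx : 1/2 < x) (hx1 : x ≤ 1) (hr0 : 0 < r) (hr2 : r ≤ 2) :
    ∫ t in x-r..x+r, f t ≤ 2*r*x := by
  have hInt : ∀ a b : ℝ, IntervalIntegrable f volume a b := fun a b => hf.intervalIntegrable a b
  rcases le_total (x - r) (-1) with ha | ha
  · -- r ≥ 1+x > 3/2, so x+r ≥ 2
    have hb : (2:ℝ) ≤ x + r := by linarith
    have e1 := intervalIntegral.integral_add_adjacent_intervals (hInt (x-r) (-1)) (hInt (-1) (x+r))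
    have e2 := intervalIntegral.integral_add_adjacent_intervals (hInt (-1) 0) (hInt 0 (x+r))
    have e3 := intervalIntegral.integral_add_adjacent_intervals (hInt 0 1) (hInt 1 (x+r))
    have e4 := intervalIntegral.integral_add_adjacent_intervals (hInt 1 2) (hInt 2 (x+r))
    have v1 := pa_int_eq (x-r) (-1) 1 2 ha
      (fun t ht => pa_m2 hper hval t ⟨by linarith [ht.1], ht.2⟩)
    have v2 := pa_int_eq (-1) 0 (-1) 0 (by norm_num) (pa_m10 hval)
    have v3 := pa_int_eq 0 1 1 0 (by norm_num) (pa_01 hval)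
    have v4 := pa_int_eq 1 2 (-1) 2 (by norm_num) (pa_12 hper hval)
    have v5 := pa_int_eq 2 (x+r) 1 (-2) hb
      (fun t ht => pa_23 hper hval t ⟨ht.1, by linarith [ht.2]⟩)
    have hI : ∫ t in x-r..x+r, f t = 2 + 2*x*(r-2) := by
      rw [← e1, ← e2, ← e3, ← e4, v1, v2, v3, v4, v5]; ring
    rw [hI]; nlinarith
  · rcases le_total (x + r) 1 with hb | hb
    · rcases le_total 0 (x - r) with hc | hc
      · have hI := pa_int_eq (x-r) (x+r) 1 0 (by linarith)
          (fun t ht => pa_01 hval t ⟨by linarith [ht.1], by linarith [ht.2]⟩)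
        rw [hI]; nlinarith
      · linarith
    · rcases le_total (x + r) 2 with hb2 | hb2
      · rcases le_total 0 (x - r) with hc | hc
        · have e2 := intervalIntegral.integral_add_adjacent_intervals (hInt (x-r) 1) (hInt 1 (x+r))
          have v2 := pa_int_eq (x-r) 1 1 0 (by linarith)
            (fun t ht => pa_01 hval t ⟨by linarith [ht.1], ht.2⟩)
          have v3 := pa_int_eq 1 (x+r) (-1) 2 hb
            (fun t ht => pa_12 hper hval t ⟨ht.1, by linarith [ht.2]⟩)
          have hI : ∫ t in x-r..x+r, f t = 1 - ((x-r)^2 + (x+r-2)^2)/2 := by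
            rw [← e2, v2, v3]; ring
          rw [hI]; nlinarith [sq_nonneg (x+r-1)]
        · have e1 := intervalIntegral.integral_add_adjacent_intervals (hInt (x-r) 0) (hInt 0 (x+r))
          have e2 := intervalIntegral.integral_add_adjacent_intervals (hInt 0 1) (hInt 1 (x+r))
          have v1 := pa_int_eq (x-r) 0 (-1) 0 hc
            (fun t ht => pa_m10 hval t ⟨by linarith [ht.1], ht.2⟩)
          have v2 := pa_int_eq 0 1 1 0 (by norm_num) (pa_01 hval)
          have v3 := pa_int_eq 1 (x+r) (-1) 2 hb
            (fun t ht => pa_12 hper hval t ⟨ht.1, by linarith [ht.2]⟩)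
          have hI : ∫ t in x-r..x+r, f t = 1 + 2*(x-1)*(1-r) := by
            rw [← e1, ← e2, v1, v2, v3]; ring
          rw [hI]; nlinarith [mul_nonneg (by linarith : (0:ℝ) ≤ 2*x-1) (by linarith : (0:ℝ) ≤ 2*r-1)]
      · rcases le_total 0 (x - r) with hc | hc
        · have e2 := intervalIntegral.integral_add_adjacent_intervals (hInt (x-r) 1) (hInt 1 (x+r))
          have e3 := intervalIntegral.integral_add_adjacent_intervals (hInt 1 2) (hInt 2 (x+r))
          have v2 := pa_int_eq (x-r) 1 1 0 (by linarith)
            (fun t ht => pa_01 hval t ⟨by linarith [ht.1], ht.2⟩)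
          have v3 := pa_int_eq 1 2 (-1) 2 (by norm_num) (pa_12 hper hval)
          have v4 := pa_int_eq 2 (x+r) 1 (-2) hb2
            (fun t ht => pa_23 hper hval t ⟨ht.1, by linarith [ht.2]⟩)
          have hI : ∫ t in x-r..x+r, f t = 1 + 2*(x-1)*(r-1) := by
            rw [← e2, ← e3, v2, v3, v4]; ring
          rw [hI]; nlinarith
        · have e1 := intervalIntegral.integral_add_adjacent_intervals (hInt (x-r) 0) (hInt 0 (x+r))
          have e2 := intervalIntegral.integral_add_adjacent_intervals (hInt 0 1) (hInt 1 (x+r))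
          have e3 := intervalIntegral.integral_add_adjacent_intervals (hInt 1 2) (hInt 2 (x+r))
          have v1 := pa_int_eq (x-r) 0 (-1) 0 hc
            (fun t ht => pa_m10 hval t ⟨by linarith [ht.1], ht.2⟩)
          have v2 := pa_int_eq 0 1 1 0 (by norm_num) (pa_01 hval)
          have v3 := pa_int_eq 1 2 (-1) 2 (by norm_num) (pa_12 hper hval)
          have v4 := pa_int_eq 2 (x+r) 1 (-2) hb2
            (fun t ht => pa_23 hper hval t ⟨ht.1, by linarith [ht.2]⟩)
          have hI : ∫ t in x-r..x+r, f t = x^2 + r^2 + 3 - 2*x - 2*r := by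
            rw [← e1, ← e2, ← e3, v1, v2, v3, v4]; ring
          rw [hI]
          nlinarith [mul_nonneg (by linarith : (0:ℝ) ≤ r - x) (by linarith : (0:ℝ) ≤ 1+x-r)]

set_option maxHeartbeats 1000000 in
lemma pa_low2 (hf : Continuous f) (hper : ∀ t, f (t + 2) = f t)
    (hval : ∀ x ∈ Set.Icc (-1 : ℝ) 1, f x = |x|) (x r : ℝ)
    (hx : 1/2 < x) (hx1 : x ≤ 1) (hr0 : 0 < r) (hr : r ≤ 1/2) :
    2*r*x - r^2 ≤ ∫ t in x-r..x+r, f t := by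
  have hInt : ∀ a b : ℝ, IntervalIntegrable f volume a b := fun a b => hf.intervalIntegrable a b
  rcases le_total (x + r) 1 with hb | hb
  · have hI := pa_int_eq (x-r) (x+r) 1 0 (by linarith)
      (fun t ht => pa_01 hval t ⟨by linarith [ht.1], by linarith [ht.2]⟩)
    rw [hI]; nlinarith
  · have e2 := intervalIntegral.integral_add_adjacent_intervals (hInt (x-r) 1) (hInt 1 (x+r))
    have v2 := pa_int_eq (x-r) 1 1 0 (by linarith)
      (fun t ht => pa_01 hval t ⟨by linarith [ht.1], ht.2⟩)
    have v3 := pa_int_eq 1 (x+r) (-1) 2 hb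
      (fun t ht => pa_12 hper hval t ⟨ht.1, by linarith [ht.2]⟩)
    have hI : ∫ t in x-r..x+r, f t = 1 - ((x-r)^2 + (x+r-2)^2)/2 := by
      rw [← e2, v2, v3]; ring
    rw [hI]
    nlinarith [mul_nonneg (by linarith : (0:ℝ) ≤ 1-x) (by linarith : (0:ℝ) ≤ 2*r - (1-x))]

set_option maxHeartbeats 1000000 in
lemma pa_wit1 (hf : Continuous f) (hper : ∀ t, f (t + 2) = f t)
    (hval : ∀ x ∈ Set.Icc (-1 : ℝ) 1, f x = |x|) (x : ℝ)
    (hx0 : 0 ≤ x) (hx : x ≤ 1/2) :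
    ∫ t in x - Real.sqrt (x^2+2)..x + Real.sqrt (x^2+2), f t
      = 2 * Real.sqrt (x^2+2) * (2 - Real.sqrt (x^2+2)) := by
  have hInt : ∀ a b : ℝ, IntervalIntegrable f volume a b := fun a b => hf.intervalIntegrable a b
  set s := Real.sqrt (x^2+2) with hs
  have hs0 : 0 ≤ s := Real.sqrt_nonneg _
  have hs2 : s^2 = x^2+2 := Real.sq_sqrt (by positivity)
  have hs1 : 1+x ≤ s := by nlinarith
  have hs2x : s ≤ 2 - x := by nlinarith
  have e1 := intervalIntegral.integral_add_adjacent_intervals (hInt (x-s) (-1)) (hInt (-1) (x+s))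
  have e2 := intervalIntegral.integral_add_adjacent_intervals (hInt (-1) 0) (hInt 0 (x+s))
  have e3 := intervalIntegral.integral_add_adjacent_intervals (hInt 0 1) (hInt 1 (x+s))
  have v1 := pa_int_eq (x-s) (-1) 1 2 (by linarith)
    (fun t ht => pa_m2 hper hval t ⟨by linarith [ht.1], ht.2⟩)
  have v2 := pa_int_eq (-1) 0 (-1) 0 (by norm_num) (pa_m10 hval)
  have v3 := pa_int_eq 0 1 1 0 (by norm_num) (pa_01 hval)
  have v4 := pa_int_eq 1 (x+s) (-1) 2 (by linarith)
    (fun t ht => pa_12 hper hval t ⟨ht.1, by linarith [ht.2]⟩)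
  rw [← e1, ← e2, ← e3, v1, v2, v3, v4]
  linear_combination hs2


set_option maxHeartbeats 1000000 in
/-- Explicit formula for the maximal function of the `2`-periodic
extension of `|x|`. -/
theorem maximal_function_of_periodic_abs
    (f : ℝ → ℝ) (hf : Continuous f) (hper : ∀ t, f (t + 2) = f t)
    (hval : ∀ x ∈ Set.Icc (-1 : ℝ) 1, f x = |x|) :
    ∀ x ∈ Set.Icc (0 : ℝ) 1,
      (x ≤ 1 / 2 → maxFunR f x = 2 - Real.sqrt (x ^ 2 + 2)) ∧
      (1 / 2 < x → maxFunR f x = x) := by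
  intro x hx
  obtain ⟨hx0, hx1⟩ := hx
  haveI : Nonempty {r : ℝ // 0 < r} := ⟨⟨1, one_pos⟩⟩
  have hInt : ∀ a b : ℝ, IntervalIntegrable f volume a b := fun a b => hf.intervalIntegrable a b
  have hnn := pa_nonneg hper hval
  have habs : ∀ a b : ℝ, (∫ t in a..b, |f t|) = ∫ t in a..b, f t := fun a b =>
    intervalIntegral.integral_congr (fun t _ => abs_of_nonneg (hnn t))
  have hsup_eq : maxFunR f x
      = ⨆ r : {r : ℝ // 0 < r}, (1 / (2 * r.1)) * ∫ t in x - r.1..x + r.1, f t := by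
    unfold maxFunR; congr 1; funext r; rw [habs]
  have ext : ∀ g : ℝ, 1/2 ≤ g →
      (∀ r : ℝ, 0 < r → r ≤ 2 → (∫ t in x-r..x+r, f t) ≤ 2*r*g) →
      ∀ r : ℝ, 0 < r → (∫ t in x-r..x+r, f t) ≤ 2*r*g := by
    intro g hg hbase
    have key : ∀ n : ℕ, ∀ r : ℝ, 0 < r → r ≤ 2*(n+1) → (∫ t in x-r..x+r, f t) ≤ 2*r*g := by
      intro n
      induction n with
      | zero => intro r h1 h2; exact hbase r h1 (by norm_num at h2; linarith)
      | succ n ih =>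
        intro r h1 h2
        rcases le_or_gt r (2*(n+1)) with h | h
        · exact ih r h1 h
        · have hn0 : (0:ℝ) ≤ (n:ℝ) := Nat.cast_nonneg n
          have h3 : 0 < r - 2 := by linarith
          have hstep : (∫ t in x-r..x+r, f t) = (∫ t in x-(r-2)..x+(r-2), f t) + 2 := by
            have h4 := pa_step hf hper hval (x-(r-2)) (x+(r-2))
            rw [show x - (r-2) - 2 = x - r by ring, show x + (r-2) + 2 = x + r by ring] at h4
            exact h4
          have h5 := ih (r-2) h3 (by push_cast at h2 ⊢; linarith)
          rw [hstep]; nlinarith [h5]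
    intro r hr
    have hn := Nat.le_ceil (r/2)
    refine key ⌈r/2⌉₊ r hr ?_
    push_cast
    linarith [hn]
  constructor
  · intro hhalf
    set s := Real.sqrt (x^2+2) with hs
    have hs0 : 0 ≤ s := Real.sqrt_nonneg _
    have hs2 : s^2 = x^2+2 := Real.sq_sqrt (by positivity)
    have hsp : 0 < s := by nlinarith
    have hub := ext (2-s) (by nlinarith) (fun r h1 h2 => pa_ub1 hf hper hval x r hx0 hhalf h1 h2)
    have bdd : BddAbove (Set.range fun r : {r : ℝ // 0 < r} =>
        (1 / (2 * r.1)) * ∫ t in x - r.1..x + r.1, f t) := by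
      refine ⟨2 - s, ?_⟩
      rintro v ⟨r, rfl⟩
      dsimp only
      rw [one_div, inv_mul_le_iff₀ (mul_pos two_pos r.2)]
      linarith [hub r.1 r.2]
    rw [hsup_eq]
    apply le_antisymm
    · exact ciSup_le (fun r => by
        rw [one_div, inv_mul_le_iff₀ (mul_pos two_pos r.2)]
        linarith [hub r.1 r.2])
    · have hw : (1 / (2 * s)) * ∫ t in x - s..x + s, f t = 2 - s := by
        rw [pa_wit1 hf hper hval x hx0 hhalf]
        field_simp
        rw [hs]
      calc 2 - s = (1 / (2 * s)) * ∫ t in x - s..x + s, f t := hw.symm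
        _ ≤ _ := le_ciSup bdd ⟨s, hsp⟩
  · intro hhalf
    have hub := ext x (by linarith) (fun r h1 h2 => pa_ub2 hf hper hval x r hhalf hx1 h1 h2)
    have bdd : BddAbove (Set.range fun r : {r : ℝ // 0 < r} =>
        (1 / (2 * r.1)) * ∫ t in x - r.1..x + r.1, f t) := by
      refine ⟨x, ?_⟩
      rintro v ⟨r, rfl⟩
      dsimp only
      rw [one_div, inv_mul_le_iff₀ (mul_pos two_pos r.2)]
      linarith [hub r.1 r.2]
    rw [hsup_eq]
    apply le_antisymm
    · exact ciSup_le (fun r => by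
        rw [one_div, inv_mul_le_iff₀ (mul_pos two_pos r.2)]
        linarith [hub r.1 r.2])
    · apply le_of_forall_pos_le_add
      intro ε hε
      set r := min ε (1/2) with hrdef
      have hr0 : 0 < r := lt_min hε (by norm_num)
      have hr : r ≤ 1/2 := min_le_right _ _
      have hre : r ≤ ε := min_le_left _ _
      have hlow := pa_low2 hf hper hval x r hhalf hx1 hr0 hr
      have h2 : (1 / (2 * r)) * (∫ t in x - r..x + r, f t)
          ≤ ⨆ r : {r : ℝ // 0 < r}, (1 / (2 * r.1)) * ∫ t in x - r.1..x + r.1, f t :=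
        le_ciSup bdd ⟨r, hr0⟩
      have h1 : x - r/2 ≤ (1 / (2 * r)) * ∫ t in x - r..x + r, f t := by
        rw [one_div, le_inv_mul_iff₀ (by positivity)]
        nlinarith [hlow]
      linarith
end

section
/- Let $f\colon\mathbb{R}\to\mathbb{R}$ be the continuous $2$-periodic function with $f(x)=|x|$ for $x\in[-1,1]$, and for $n\in\mathbb{N}$ set $f_n(x)=f(x)-\tfrac1n$. Then for all sufficiently large $n$, $Mf_n\big(\tfrac12\big)=1-\sqrt{-\tfrac{1}{n^{2}}+\tfrac{1}{n}+\tfrac14}$. -/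
set_option maxHeartbeats 2000000

open MeasureTheory Metric Set Filter

private lemma integ_affine (p q a b : ℝ) :
    ∫ t in a..b, (p * t + q) = p * (b ^ 2 - a ^ 2) / 2 + q * (b - a) := by
  have h1 : IntervalIntegrable (fun t : ℝ => p * t) MeasureTheory.volume a b :=
    (continuous_const.mul continuous_id).intervalIntegrable a b
  have h2 : IntervalIntegrable (fun _ : ℝ => q) MeasureTheory.volume a b := intervalIntegrable_const
  open intervalIntegral in
  rw [intervalIntegral.integral_add h1 h2, intervalIntegral.integral_const, intervalIntegral.integral_const_mul, integral_id, smul_eq_mul]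
  ring

private lemma piece_int (g : ℝ → ℝ) (p q a b : ℝ) (hab : a ≤ b)
    (h : ∀ t ∈ Set.Icc a b, g t = p * t + q) :
    ∫ t in a..b, g t = p * (b ^ 2 - a ^ 2) / 2 + q * (b - a) := by
  open intervalIntegral in
  rw [intervalIntegral.integral_congr (g := fun t => p * t + q)
    (fun t ht => h t ((Set.uIcc_of_le hab ▸ ht))), integ_affine]

private noncomputable def Ifun (f : ℝ → ℝ) (c r : ℝ) : ℝ :=
  ∫ t in (1/2 - r)..(1/2 + r), |f t - c|

private lemma Ifun_main (f : ℝ → ℝ) (hf : Continuous f) (hper : ∀ t, f (t + 2) = f t)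
    (hval : ∀ x ∈ Set.Icc (-1 : ℝ) 1, f x = |x|) (c : ℝ) (hc0 : 0 < c) (hc : c ≤ 1/8) :
    (∀ r : ℝ, 0 < r → Ifun f c r ≤ 2 * (1 - Real.sqrt (1/4 + c - c^2)) * r) ∧
      Ifun f c (Real.sqrt (1/4 + c - c^2)) =
        2 * (1 - Real.sqrt (1/4 + c - c^2)) * Real.sqrt (1/4 + c - c^2) ∧
      1/2 ≤ Real.sqrt (1/4 + c - c^2) ∧ Real.sqrt (1/4 + c - c^2) ≤ 1 := by
  set q := Real.sqrt (1/4 + c - c^2) with hqdef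
  have hq2 : q ^ 2 = 1/4 + c - c^2 := Real.sq_sqrt (by nlinarith)
  have hq0 : 0 ≤ q := Real.sqrt_nonneg _
  have hq_lb : 1/2 ≤ q := by nlinarith
  have hq_ub : q ≤ 1/2 + c - c^2 := by nlinarith [sq_nonneg (c - c^2)]
  have hq_ub' : q ≤ 1/2 + c := by nlinarith [sq_nonneg c]
  have hq1 : q ≤ 1 := by nlinarith
  -- interval integrability and splitting
  have hGi : ∀ a b : ℝ, IntervalIntegrable (fun t => |f t - c|) MeasureTheory.volume a b :=
    fun a b => ((hf.sub continuous_const).abs).intervalIntegrable a b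
  have hsplit : ∀ a b d : ℝ, (∫ t in a..b, |f t - c|) + (∫ t in b..d, |f t - c|)
      = ∫ t in a..d, |f t - c| :=
    fun a b d => intervalIntegral.integral_add_adjacent_intervals (hGi a b) (hGi b d)
  -- values of f on [1,3]
  have hfB : ∀ t ∈ Set.Icc (1:ℝ) 3, f t = |t - 2| := by
    intro t ht
    have h2 := hper (t - 2)
    rw [show t - 2 + 2 = t from by ring] at h2
    rw [h2]
    exact hval (t - 2) ⟨by linarith [ht.1], by linarith [ht.2]⟩
  -- piecewise formulas for |f t - c|
  have hGm1 : ∀ t ∈ Set.Icc (-(1:ℝ)) (-c), |f t - c| = (-1) * t + (-c) := by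
    intro t ht
    rw [hval t ⟨ht.1, by linarith [ht.2]⟩, abs_of_nonpos (by linarith [ht.2] : t ≤ 0),
      abs_of_nonneg (by linarith [ht.2] : (0:ℝ) ≤ -t - c)]
    ring
  have hGm2 : ∀ t ∈ Set.Icc (-c) (0:ℝ), |f t - c| = 1 * t + c := by
    intro t ht
    rw [hval t ⟨by linarith [ht.1], by linarith [ht.2]⟩, abs_of_nonpos ht.2,
      abs_of_nonpos (by linarith [ht.1] : -t - c ≤ 0)]
    ring
  have hG3 : ∀ t ∈ Set.Icc (0:ℝ) c, |f t - c| = (-1) * t + c := by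
    intro t ht
    rw [hval t ⟨by linarith [ht.1], by linarith [ht.2]⟩, abs_of_nonneg ht.1,
      abs_of_nonpos (by linarith [ht.2] : t - c ≤ 0)]
    ring
  have hG4 : ∀ t ∈ Set.Icc c (1:ℝ), |f t - c| = 1 * t + (-c) := by
    intro t ht
    rw [hval t ⟨by linarith [ht.1], ht.2⟩, abs_of_nonneg (by linarith [ht.1] : (0:ℝ) ≤ t),
      abs_of_nonneg (by linarith [ht.1] : (0:ℝ) ≤ t - c)]
    ring
  have hG5 : ∀ t ∈ Set.Icc (1:ℝ) (3/2 : ℝ), |f t - c| = (-1) * t + (2 - c) := by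
    intro t ht
    rw [hfB t ⟨ht.1, by linarith [ht.2]⟩, abs_of_nonpos (by linarith [ht.2] : t - 2 ≤ 0),
      abs_of_nonneg (by linarith [ht.2] : (0:ℝ) ≤ -(t - 2) - c)]
    ring
  -- exact formulas on the four base ranges
  have hI1 : ∀ r : ℝ, 0 < r → r ≤ 1/2 - c → Ifun f c r = (1 - 2*c) * r := by
    intro r h0 h1
    show (∫ t in (1/2 - r)..(1/2 + r), |f t - c|) = _
    rw [piece_int _ 1 (-c) _ _ (by linarith)
      (fun t ht => hG4 t ⟨by linarith [ht.1], by linarith [ht.2]⟩)]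
    ring
  have hI2 : ∀ r : ℝ, 1/2 - c ≤ r → r ≤ 1/2 → Ifun f c r = r^2 + (1/2 - c)^2 := by
    intro r h0 h1
    show (∫ t in (1/2 - r)..(1/2 + r), |f t - c|) = _
    rw [← hsplit (1/2 - r) c (1/2 + r),
      piece_int _ (-1) c _ _ (by linarith)
        (fun t ht => hG3 t ⟨by linarith [ht.1], ht.2⟩),
      piece_int _ 1 (-c) _ _ (by linarith)
        (fun t ht => hG4 t ⟨ht.1, by linarith [ht.2]⟩)]
    ring
  have hI3 : ∀ r : ℝ, 1/2 ≤ r → r ≤ 1/2 + c →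
      Ifun f c r = (r - 1/2) - (r - 1/2)^2 + c^2/2 + (1 - c)^2/2 := by
    intro r h0 h1
    show (∫ t in (1/2 - r)..(1/2 + r), |f t - c|) = _
    rw [← hsplit (1/2 - r) 0 (1/2 + r), ← hsplit 0 c (1/2 + r), ← hsplit c 1 (1/2 + r),
      piece_int _ 1 c _ _ (by linarith)
        (fun t ht => hGm2 t ⟨by linarith [ht.1], ht.2⟩),
      piece_int _ (-1) c _ _ (by linarith) hG3,
      piece_int _ 1 (-c) _ _ (by linarith) hG4,
      piece_int _ (-1) (2 - c) _ _ (by linarith)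
        (fun t ht => hG5 t ⟨ht.1, by linarith [ht.2]⟩)]
    ring
  have hI4 : ∀ r : ℝ, 1/2 + c ≤ r → r ≤ 1 →
      Ifun f c r = (r - 1/2 - c)^2/2 + c^2 + (1 - c)^2/2 + (r - 1/2)*(5/2 - 2*c - r)/2 := by
    intro r h0 h1
    show (∫ t in (1/2 - r)..(1/2 + r), |f t - c|) = _
    rw [← hsplit (1/2 - r) (-c) (1/2 + r), ← hsplit (-c) 0 (1/2 + r),
      ← hsplit 0 c (1/2 + r), ← hsplit c 1 (1/2 + r),
      piece_int _ (-1) (-c) _ _ (by linarith)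
        (fun t ht => hGm1 t ⟨by linarith [ht.1], ht.2⟩),
      piece_int _ 1 c _ _ (by linarith) hGm2,
      piece_int _ (-1) c _ _ (by linarith) hG3,
      piece_int _ 1 (-c) _ _ (by linarith) hG4,
      piece_int _ (-1) (2 - c) _ _ (by linarith)
        (fun t ht => hG5 t ⟨ht.1, by linarith [ht.2]⟩)]
    ring
  -- integral over one full period
  have hP : (∫ t in (-(1/2) : ℝ)..(3/2 : ℝ), |f t - c|) = c^2 + (1 - c)^2 := by
    rw [← hsplit (-(1/2)) (-c) (3/2), ← hsplit (-c) 0 (3/2),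
      ← hsplit 0 c (3/2), ← hsplit c 1 (3/2),
      piece_int _ (-1) (-c) _ _ (by linarith)
        (fun t ht => hGm1 t ⟨by linarith [ht.1], ht.2⟩),
      piece_int _ 1 c _ _ (by linarith) hGm2,
      piece_int _ (-1) c _ _ (by linarith) hG3,
      piece_int _ 1 (-c) _ _ (by linarith) hG4,
      piece_int _ (-1) (2 - c) _ _ (by linarith) hG5]
    ring
  -- f is even
  have hp : Function.Periodic f 2 := hper
  have hfint : ∀ (t : ℝ) (k : ℤ), f (t + k * 2) = f t := fun t k => (hp.int_mul k) t
  have hfeven : ∀ t : ℝ, f (-t) = f t := by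
    intro t
    set k : ℤ := round (t / 2) with hk
    have hrd : |t / 2 - k| ≤ 1/2 := abs_sub_round (t / 2)
    rw [abs_le] at hrd
    have hk1 : -1 ≤ t - 2 * k := by linarith [hrd.1]
    have hk2 : t - 2 * k ≤ 1 := by linarith [hrd.2]
    have e1 : f t = |t - 2 * (k:ℝ)| := by
      have h2 := hfint (t - 2 * (k:ℝ)) k
      rw [show t - 2 * (k:ℝ) + (k:ℝ) * 2 = t from by ring] at h2
      rw [h2]
      exact hval _ ⟨hk1, hk2⟩
    have e2 : f (-t) = |t - 2 * (k:ℝ)| := by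
      have h2 := hfint (-(t - 2 * (k:ℝ))) (-k)
      rw [show -(t - 2 * (k:ℝ)) + ((-k : ℤ) : ℝ) * 2 = -t from by push_cast; ring] at h2
      rw [h2, hval _ ⟨by linarith, by linarith⟩, abs_neg]
    rw [e1, e2]
  have hGper : Function.Periodic (fun t => |f t - c|) 2 := fun x => by
    simp only [hper x]
  -- the periodicity step
  have hstep : ∀ s : ℝ, Ifun f c (s + 1) = Ifun f c s + (c^2 + (1 - c)^2) := by
    intro s
    have e2 : (∫ t in (1/2 - (s+1))..(1/2 - s), |f t - c|)
        = ∫ t in (s - 1/2)..(s + 1/2), |f t - c| := by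
      have h3 : (∫ x in (s - 1/2)..(s + 1/2), |f (-x) - c|)
          = ∫ x in (-(s + 1/2))..(-(s - 1/2)), |f x - c| :=
        intervalIntegral.integral_comp_neg (fun x => |f x - c|)
      simp only [hfeven] at h3
      rw [show (1/2 - (s+1) : ℝ) = -(s + 1/2) from by ring,
        show (1/2 - s : ℝ) = -(s - 1/2) from by ring, ← h3]
    have e4 : (∫ t in (s - 1/2)..(s + 3/2), |f t - c|)
        = ∫ t in (-(1/2) : ℝ)..(3/2 : ℝ), |f t - c| := by
      have h5 := hGper.intervalIntegral_add_eq (s - 1/2) (-(1/2))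
      rw [show s - 1/2 + 2 = s + 3/2 from by ring,
        show (-(1/2) : ℝ) + 2 = (3/2 : ℝ) from by norm_num] at h5
      exact h5
    show (∫ t in (1/2 - (s+1))..(1/2 + (s+1)), |f t - c|) = _
    rw [← hsplit (1/2 - (s+1)) (1/2 - s) (1/2 + (s+1)),
      ← hsplit (1/2 - s) (1/2 + s) (1/2 + (s+1)), e2]
    have e5 : (∫ t in (1/2 + s)..(1/2 + (s+1)), |f t - c|)
        = ∫ t in (s + 1/2)..(s + 3/2), |f t - c| := by
      rw [show (1/2 + s : ℝ) = s + 1/2 from by ring,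
        show (1/2 + (s+1) : ℝ) = s + 3/2 from by ring]
    rw [e5]
    have e6 := hsplit (s - 1/2) (s + 1/2) (s + 3/2)
    show (∫ t in (s - 1/2)..(s + 1/2), |f t - c|) +
        ((∫ t in (1/2 - s)..(1/2 + s), |f t - c|) + (∫ t in (s + 1/2)..(s + 3/2), |f t - c|)) = _
    have : Ifun f c s = ∫ t in (1/2 - s)..(1/2 + s), |f t - c| := rfl
    rw [this]
    linarith [e6, e4, hP]
  -- base upper bound on (0,1]
  have hPle : c^2 + (1 - c)^2 ≤ 2 * (1 - q) := by nlinarith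
  have hbase : ∀ r : ℝ, 0 < r → r ≤ 1 → Ifun f c r ≤ 2 * (1 - q) * r := by
    intro r h0 h1
    rcases le_or_gt r (1/2 - c) with h2 | h2
    · rw [hI1 r h0 h2]; nlinarith
    rcases le_or_gt r (1/2) with h3 | h3
    · rw [hI2 r h2.le h3]
      nlinarith [mul_nonneg (by linarith : (0:ℝ) ≤ r - (1/2 - c)) (by linarith : (0:ℝ) ≤ 1/2 - r)]
    rcases le_or_gt r (1/2 + c) with h4 | h4
    · rw [hI3 r h3.le h4]; nlinarith [sq_nonneg (r - q)]
    · rw [hI4 r h4.le h1]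
      nlinarith [sq_nonneg (c - q + 1/2),
        mul_nonneg (by linarith : (0:ℝ) ≤ r - (1/2 + c)) (by nlinarith : (0:ℝ) ≤ 1 + 2*c - 2*q)]
  -- full upper bound
  have key : ∀ m : ℕ, ∀ r : ℝ, 0 < r → r ≤ 1 → Ifun f c (r + m) ≤ 2 * (1 - q) * (r + m) := by
    intro m
    induction m with
    | zero => intro r h0 h1; simpa using hbase r h0 h1
    | succ m ih =>
      intro r h0 h1
      have harg : r + ((m + 1 : ℕ) : ℝ) = (r + m) + 1 := by push_cast; ring
      rw [harg, hstep (r + (m:ℝ))]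
      have h5 := ih r h0 h1
      have hexp : 2 * (1 - q) * ((r + m) + 1) = 2 * (1 - q) * (r + m) + 2 * (1 - q) := by ring
      linarith [hPle]
  have hub : ∀ r : ℝ, 0 < r → Ifun f c r ≤ 2 * (1 - q) * r := by
    intro r h0
    rcases le_or_gt r 1 with h1 | h1
    · simpa using key 0 r h0 h1
    · have h2 : r ≤ (⌈r⌉₊ : ℝ) := Nat.le_ceil r
      have h3 : ((⌈r⌉₊ : ℕ) : ℝ) < r + 1 := Nat.ceil_lt_add_one h0.le
      have h1c : 1 ≤ ⌈r⌉₊ := Nat.one_le_ceil_iff.mpr h0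
      set m : ℕ := ⌈r⌉₊ - 1 with hm
      have hmc : (m : ℝ) = (⌈r⌉₊ : ℝ) - 1 := by
        rw [hm, Nat.cast_sub h1c]; norm_num
      have h4 : 0 < r - m := by rw [hmc]; linarith
      have h5 : r - m ≤ 1 := by rw [hmc]; linarith
      have h6 := key m (r - m) h4 h5
      rw [show (r - (m:ℝ)) + (m:ℝ) = r from by ring] at h6
      exact h6
  refine ⟨hub, ?_, hq_lb, hq1⟩
  rw [hI3 q hq_lb hq_ub']
  linear_combination hq2


/-- Value of the maximal function of `f - 1/n` at `1/2`, for the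
`2`-periodic extension `f` of `|x|` and large `n`. -/
theorem maximal_function_shifted_at_half
    (f : ℝ → ℝ) (hf : Continuous f) (hper : ∀ t, f (t + 2) = f t)
    (hval : ∀ x ∈ Set.Icc (-1 : ℝ) 1, f x = |x|) :
    ∀ᶠ n : ℕ in atTop,
      maxFunR (fun x => f x - 1 / n) (1 / 2) =
        1 - Real.sqrt (-(1 / (n : ℝ) ^ 2) + 1 / n + 1 / 4) := by
  filter_upwards [eventually_ge_atTop 8] with n hn
  have hn' : (8:ℝ) ≤ (n:ℝ) := by exact_mod_cast hn
  have hn0 : (0:ℝ) < (n:ℝ) := by linarith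
  set c : ℝ := 1 / (n:ℝ) with hcdef
  have hc0 : 0 < c := by positivity
  have hc : c ≤ 1/8 := by
    rw [hcdef, div_le_div_iff₀ hn0 (by norm_num : (0:ℝ) < 8)]
    linarith
  obtain ⟨hub, hval2, hqlb, hq1⟩ := Ifun_main f hf hper hval c hc0 hc
  rw [show (-(1 / (n:ℝ)^2) + 1/(n:ℝ) + 1/4) = 1/4 + c - c^2 from by rw [hcdef]; ring]
  set q := Real.sqrt (1/4 + c - c^2) with hqdef
  have hq0 : 0 < q := lt_of_lt_of_le (by norm_num) hqlb
  have hbdd : ∀ r : {r : ℝ // 0 < r}, (1/(2*r.1)) * Ifun f c r.1 ≤ 1 - q := by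
    rintro ⟨r, hr⟩
    have h1 := hub r hr
    have h2 : (0:ℝ) < 2*r := by linarith
    calc (1/(2*r)) * Ifun f c r ≤ (1/(2*r)) * (2*(1-q)*r) :=
          mul_le_mul_of_nonneg_left h1 (by positivity)
      _ = 1 - q := by field_simp
  have hB : BddAbove (Set.range fun r : {r:ℝ//0<r} => (1/(2*r.1)) * Ifun f c r.1) :=
    ⟨1 - q, by rintro x ⟨r, rfl⟩; exact hbdd r⟩
  show (⨆ r : {r : ℝ // 0 < r}, (1 / (2 * r.1)) * Ifun f c r.1) = 1 - q
  apply le_antisymm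
  · exact ciSup_le hbdd
  · have hle := le_ciSup hB (⟨q, hq0⟩ : {r : ℝ // 0 < r})
    have hv : (1/(2*q)) * Ifun f c q = 1 - q := by
      rw [hval2]; field_simp
    rw [← hv]
    exact hle
end

section
/- Let $f\colon\mathbb{R}\to\mathbb{R}$ be the continuous $2$-periodic function with $f(x)=|x|$ for $x\in[-1,1]$, and for $n\in\mathbb{N}$ set $f_n(x)=f(x)-\tfrac1n$ and $d_n=\tfrac12-\tfrac{1}{4n^{2}}$. Then for all sufficiently large $n$ and all $r\in(0,2]$, $\frac{1}{2r}\int_{d_n-r}^{d_n+r}|f_n(t)|\,dt\leq 1-\sqrt{-\tfrac{1}{n^{2}}+\tfrac{1}{n}+\tfrac14}$. -/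
open MeasureTheory Metric Set Filter

lemma lin_int (α β a b : ℝ) : ∫ t in a..b, (α*t+β) = α*(b^2-a^2)/2 + β*(b-a) := by
  have hd : ∀ x : ℝ, HasDerivAt (fun t => α*t^2/2 + β*t) (α*x+β) x := by
    intro x
    have h1 : HasDerivAt (fun t : ℝ => t^2) (2*x) x := by
      simpa using hasDerivAt_pow 2 x
    have := (h1.const_mul (α/2)).add ((hasDerivAt_id x).const_mul β)
    convert this using 1
    · rfl
    · rfl
    · ext t; simp [id]; ring
    · ring
  rw [intervalIntegral.integral_eq_sub_of_hasDerivAt (fun x _ => hd x)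
      (((continuous_const.mul continuous_id).add continuous_const).intervalIntegrable a b)]
  ring

set_option maxHeartbeats 16000000 in
/-- For large `n`, all averages of `|f_n|` over intervals centred at
`d_n = 1/2 - 1/(4n²)` with radius `r ∈ (0, 2]` are bounded by
`1 - √(-1/n² + 1/n + 1/4)`, where `f_n = f - 1/n` and `f` is the `2`-periodic
extension of `|x|`. -/
theorem averages_at_dn_bounded
    (f : ℝ → ℝ) (hf : Continuous f) (hper : ∀ t, f (t + 2) = f t)
    (hval : ∀ x ∈ Set.Icc (-1 : ℝ) 1, f x = |x|) :
    ∀ᶠ n : ℕ in atTop, ∀ r ∈ Set.Ioc (0 : ℝ) 2,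
      (1 / (2 * r)) *
          ∫ t in (1 / 2 - 1 / (4 * (n : ℝ) ^ 2) - r)..(1 / 2 - 1 / (4 * (n : ℝ) ^ 2) + r),
            |f t - 1 / n| ≤
        1 - Real.sqrt (-(1 / (n : ℝ) ^ 2) + 1 / n + 1 / 4) := by
  filter_upwards [eventually_ge_atTop 10] with n hn10
  intro r hr
  obtain ⟨hr0, hr2⟩ := hr
  have hn10' : (10:ℝ) ≤ (n:ℝ) := by exact_mod_cast hn10
  obtain ⟨c, hcdef⟩ : ∃ x : ℝ, x = 1/(n:ℝ) := ⟨_, rfl⟩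
  have hc0 : 0 < c := by rw [hcdef]; positivity
  have hc : c ≤ 1/10 := by
    rw [hcdef, div_le_div_iff₀ (by linarith) (by norm_num)]
    linarith
  have harg : -(1 / (n : ℝ) ^ 2) + 1 / n + 1 / 4 = 1/4 + c - c^2 := by
    rw [hcdef]; ring
  have hdrw : (1:ℝ) / 2 - 1 / (4 * (n : ℝ) ^ 2) = 1/2 - c^2/4 := by
    rw [hcdef]; ring
  rw [harg, hdrw]
  simp only [← hcdef]
  obtain ⟨s, hsdef⟩ : ∃ x : ℝ, x = Real.sqrt (1/4 + c - c^2) := ⟨_, rfl⟩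
  rw [← hsdef]
  have hargnn : (0:ℝ) ≤ 1/4 + c - c^2 := by nlinarith
  have hs2 : s^2 = 1/4 + c - c^2 := by rw [hsdef]; exact Real.sq_sqrt hargnn
  have hslo : 1/2 ≤ s := by
    rw [hsdef, show (1:ℝ)/2 = Real.sqrt ((1/2)^2) by rw [Real.sqrt_sq]; norm_num]
    exact Real.sqrt_le_sqrt (by nlinarith)
  have hshi : s ≤ 1/2 + c := by
    rw [hsdef, show (1:ℝ)/2 + c = Real.sqrt ((1/2+c)^2) by rw [Real.sqrt_sq]; linarith]
    exact Real.sqrt_le_sqrt (by nlinarith)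
  have hshi2 : (1+2*c)*s ≤ 1/2 + 2*c := by nlinarith [hs2, sq_nonneg (s - 1/2 - c)]
  have hT : 0 ≤ 1/2 + 2*c - (1+2*c)*s := by linarith
  have hT2 : s ≤ 1/2 + c - 2*c^2 + 4*c^3 := by
    rw [hsdef, show (1:ℝ)/2 + c - 2*c^2 + 4*c^3
        = Real.sqrt ((1/2 + c - 2*c^2 + 4*c^3)^2) by
      rw [Real.sqrt_sq]; nlinarith]
    exact Real.sqrt_le_sqrt
      (by nlinarith [sq_nonneg c, sq_nonneg (c - 1/10), pow_pos hc0 3, pow_pos hc0 4])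
  rw [div_mul_eq_mul_div, one_mul, div_le_iff₀ (by positivity)]
  have hi : ∀ a b : ℝ, IntervalIntegrable (fun t => |f t - c|) volume a b :=
    fun a b => ((hf.sub continuous_const).abs).intervalIntegrable a b
  have hv1 : ∀ t : ℝ, -1 ≤ t → t ≤ 1 → f t = |t| := fun t h1 h2 => hval t ⟨h1, h2⟩
  have hv2 : ∀ t : ℝ, 1 ≤ t → t ≤ 3 → f t = |t - 2| := by
    intro t h1 h3
    have h := hper (t - 2)
    rw [sub_add_cancel] at h
    rw [h, hv1 (t-2) (by linarith) (by linarith)]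
  have hv3 : ∀ t : ℝ, -3 ≤ t → t ≤ -1 → f t = |t + 2| := by
    intro t h1 h3
    rw [← hper t, hv1 (t+2) (by linarith) (by linarith)]
  have piece : ∀ a b α β : ℝ, a ≤ b → (∀ t, a ≤ t → t ≤ b → |f t - c| = α*t+β) →
      ∫ t in a..b, |f t - c| = α*(b^2-a^2)/2 + β*(b-a) := by
    intro a b α β hab hE
    rw [intervalIntegral.integral_congr (g := fun t => α*t+β)
      (fun t ht => by
        rw [Set.uIcc_of_le hab] at ht
        exact hE t ht.1 ht.2), lin_int]
  have pA : ∀ a b : ℝ, c ≤ a → b ≤ 1 → a ≤ b →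
      ∫ t in a..b, |f t - c| = 1*(b^2-a^2)/2 + (-c)*(b-a) := by
    intro a b h1 h2 h3
    exact piece a b 1 (-c) h3 (fun t ht1 ht2 => by
      rw [hv1 t (by linarith) (by linarith), abs_of_nonneg (show (0:ℝ) ≤ t by linarith),
        abs_of_nonneg (by linarith)]; ring)
  have pB : ∀ a b : ℝ, 0 ≤ a → b ≤ c → a ≤ b →
      ∫ t in a..b, |f t - c| = (-1)*(b^2-a^2)/2 + c*(b-a) := by
    intro a b h1 h2 h3
    exact piece a b (-1) c h3 (fun t ht1 ht2 => by
      rw [hv1 t (by linarith) (by linarith), abs_of_nonneg (show (0:ℝ) ≤ t by linarith),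
        abs_of_nonpos (by linarith)]; ring)
  have pC : ∀ a b : ℝ, -c ≤ a → b ≤ 0 → a ≤ b →
      ∫ t in a..b, |f t - c| = 1*(b^2-a^2)/2 + c*(b-a) := by
    intro a b h1 h2 h3
    exact piece a b 1 c h3 (fun t ht1 ht2 => by
      rw [hv1 t (by linarith) (by linarith), abs_of_nonpos (show t ≤ (0:ℝ) by linarith),
        abs_of_nonpos (by linarith)]; ring)
  have pD : ∀ a b : ℝ, -1 ≤ a → b ≤ -c → a ≤ b →
      ∫ t in a..b, |f t - c| = (-1)*(b^2-a^2)/2 + (-c)*(b-a) := by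
    intro a b h1 h2 h3
    exact piece a b (-1) (-c) h3 (fun t ht1 ht2 => by
      rw [hv1 t (by linarith) (by linarith), abs_of_nonpos (show t ≤ (0:ℝ) by linarith),
        abs_of_nonneg (by linarith)]; ring)
  have pE : ∀ a b : ℝ, 1 ≤ a → b ≤ 2-c → a ≤ b →
      ∫ t in a..b, |f t - c| = (-1)*(b^2-a^2)/2 + (2-c)*(b-a) := by
    intro a b h1 h2 h3
    exact piece a b (-1) (2-c) h3 (fun t ht1 ht2 => by
      rw [hv2 t (by linarith) (by linarith), abs_of_nonpos (show t - 2 ≤ (0:ℝ) by linarith),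
        abs_of_nonneg (by linarith)]; ring)
  have pF : ∀ a b : ℝ, 2-c ≤ a → b ≤ 2 → a ≤ b →
      ∫ t in a..b, |f t - c| = 1*(b^2-a^2)/2 + (c-2)*(b-a) := by
    intro a b h1 h2 h3
    exact piece a b 1 (c-2) h3 (fun t ht1 ht2 => by
      rw [hv2 t (by linarith) (by linarith), abs_of_nonpos (show t - 2 ≤ (0:ℝ) by linarith),
        abs_of_nonpos (by linarith)]; ring)
  have pG : ∀ a b : ℝ, 2 ≤ a → b ≤ 2+c → a ≤ b →
      ∫ t in a..b, |f t - c| = (-1)*(b^2-a^2)/2 + (2+c)*(b-a) := by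
    intro a b h1 h2 h3
    exact piece a b (-1) (2+c) h3 (fun t ht1 ht2 => by
      rw [hv2 t (by linarith) (by linarith), abs_of_nonneg (show (0:ℝ) ≤ t - 2 by linarith),
        abs_of_nonpos (by linarith)]; ring)
  have pH : ∀ a b : ℝ, 2+c ≤ a → b ≤ 3 → a ≤ b →
      ∫ t in a..b, |f t - c| = 1*(b^2-a^2)/2 + (-(2+c))*(b-a) := by
    intro a b h1 h2 h3
    exact piece a b 1 (-(2+c)) h3 (fun t ht1 ht2 => by
      rw [hv2 t (by linarith) (by linarith), abs_of_nonneg (show (0:ℝ) ≤ t - 2 by linarith),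
        abs_of_nonneg (by linarith)]; ring)
  have pI : ∀ a b : ℝ, -2+c ≤ a → b ≤ -1 → a ≤ b →
      ∫ t in a..b, |f t - c| = 1*(b^2-a^2)/2 + (2-c)*(b-a) := by
    intro a b h1 h2 h3
    exact piece a b 1 (2-c) h3 (fun t ht1 ht2 => by
      rw [hv3 t (by linarith) (by linarith), abs_of_nonneg (show (0:ℝ) ≤ t + 2 by linarith),
        abs_of_nonneg (by linarith)]; ring)
  obtain ⟨L, hLd⟩ : ∃ x : ℝ, x = 1/2 - c^2/4 - r := ⟨_, rfl⟩
  obtain ⟨R, hRd⟩ : ∃ x : ℝ, x = 1/2 - c^2/4 + r := ⟨_, rfl⟩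
  rw [← hLd, ← hRd]
  rcases le_or_gt r (1/2 - c^2/4 - c) with h1 | h1
  · -- Case A
    rw [pA L R (by nlinarith) (by nlinarith) (by nlinarith)]
    nlinarith [hs2, hshi, hr0, hc0, mul_pos hr0 hc0]
  rcases le_or_gt r (1/2 - c^2/4) with h2 | h2
  · -- Case B
    rw [← intervalIntegral.integral_add_adjacent_intervals (hi L c) (hi c R),
      pB L c (by nlinarith) le_rfl (by nlinarith),
      pA c R le_rfl (by nlinarith) (by nlinarith)]
    nlinarith [hs2, hshi2, hslo, hc0, hc,
      mul_nonneg (show (0:ℝ) ≤ r - (1/2 - c^2/4 - c) by linarith)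
        (show (0:ℝ) ≤ 1/2 - c^2/4 - r by linarith)]
  rcases le_or_gt r (1/2 + c^2/4) with h3 | h3
  · -- Case C
    rw [← intervalIntegral.integral_add_adjacent_intervals (hi L c) (hi c R),
      ← intervalIntegral.integral_add_adjacent_intervals (hi L 0) (hi 0 c),
      pC L 0 (by nlinarith) (by nlinarith) (by nlinarith),
      pB 0 c le_rfl le_rfl hc0.le,
      pA c R le_rfl (by nlinarith) (by nlinarith)]
    nlinarith [hs2, hshi2, hslo, hc0, hc, hr0,
      mul_nonneg hr0.le (show (0:ℝ) ≤ (1/2+2*c) - (1+2*c)*s by linarith)]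
  rcases le_or_gt r (1/2 - c^2/4 + c) with h4 | h4
  · -- Case D
    rw [← intervalIntegral.integral_add_adjacent_intervals (hi L 1) (hi 1 R),
      ← intervalIntegral.integral_add_adjacent_intervals (hi L c) (hi c 1),
      ← intervalIntegral.integral_add_adjacent_intervals (hi L 0) (hi 0 c),
      pC L 0 (by nlinarith) (by nlinarith) (by nlinarith),
      pB 0 c le_rfl le_rfl hc0.le,
      pA c 1 le_rfl le_rfl (by linarith),
      pE 1 R (by nlinarith) (by nlinarith) (by nlinarith)]
    nlinarith [hs2, sq_nonneg (r - s), hc0, hc, mul_pos hc0 hc0]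
  rcases le_or_gt r (3/2 - c + c^2/4) with h5 | h5
  · -- Case E : [L,-c,0,c,1,R]
    rw [← intervalIntegral.integral_add_adjacent_intervals (hi L 1) (hi 1 R),
      ← intervalIntegral.integral_add_adjacent_intervals (hi L c) (hi c 1),
      ← intervalIntegral.integral_add_adjacent_intervals (hi L 0) (hi 0 c),
      ← intervalIntegral.integral_add_adjacent_intervals (hi L (-c)) (hi (-c) 0),
      pD L (-c) (by nlinarith) (by nlinarith) (by nlinarith),
      pC (-c) 0 le_rfl le_rfl (by linarith),
      pB 0 c le_rfl le_rfl hc0.le,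
      pA c 1 le_rfl le_rfl (by linarith),
      pE 1 R (by nlinarith) (by nlinarith) (by nlinarith)]
    subst hLd; subst hRd
    nlinarith [hc0, hc, hs2,
      mul_nonneg hr0.le (by linarith : (0:ℝ) ≤ 1/2 + c - 2*c^2 + 4*c^3 - s),
      mul_nonneg (by linarith : (0:ℝ) ≤ r - (1/2 - c^2/4 + c))
        (by nlinarith : (0:ℝ) ≤ 7*c^2/4 - 4*c^3),
      mul_nonneg (sq_nonneg c)
        (by nlinarith [mul_pos hc0 hc0, mul_pos (mul_pos hc0 hc0) hc0] :
          (0:ℝ) ≤ 1/4 - c/2 - 71*c^2/8 + 2*c^3)]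
  rcases le_or_gt r (3/2 - c^2/4) with h6 | h6
  · -- Case F : [L,-c,0,c,1,2-c,R]
    rw [← intervalIntegral.integral_add_adjacent_intervals (hi L (2-c)) (hi (2-c) R),
      ← intervalIntegral.integral_add_adjacent_intervals (hi L 1) (hi 1 (2-c)),
      ← intervalIntegral.integral_add_adjacent_intervals (hi L c) (hi c 1),
      ← intervalIntegral.integral_add_adjacent_intervals (hi L 0) (hi 0 c),
      ← intervalIntegral.integral_add_adjacent_intervals (hi L (-c)) (hi (-c) 0),
      pD L (-c) (by nlinarith) (by nlinarith) (by nlinarith),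
      pC (-c) 0 le_rfl le_rfl (by linarith),
      pB 0 c le_rfl le_rfl hc0.le,
      pA c 1 le_rfl le_rfl (by linarith),
      pE 1 (2-c) le_rfl le_rfl (by linarith),
      pF (2-c) R le_rfl (by nlinarith) (by nlinarith)]
    subst hLd; subst hRd
    nlinarith [mul_nonneg hr0.le hT, hT, hc0, hc, hs2,
      mul_nonneg (by linarith : (0:ℝ) ≤ r - (3/2 - c + c^2/4))
        (by linarith : (0:ℝ) ≤ 3/2 - c^2/4 - r)]
  rcases le_or_gt r (3/2 + c^2/4) with h7 | h7
  · -- Case G : [L,-1,-c,0,c,1,2-c,R]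
    rw [← intervalIntegral.integral_add_adjacent_intervals (hi L (2-c)) (hi (2-c) R),
      ← intervalIntegral.integral_add_adjacent_intervals (hi L 1) (hi 1 (2-c)),
      ← intervalIntegral.integral_add_adjacent_intervals (hi L c) (hi c 1),
      ← intervalIntegral.integral_add_adjacent_intervals (hi L 0) (hi 0 c),
      ← intervalIntegral.integral_add_adjacent_intervals (hi L (-c)) (hi (-c) 0),
      ← intervalIntegral.integral_add_adjacent_intervals (hi L (-1)) (hi (-1) (-c)),
      pI L (-1) (by nlinarith) (by nlinarith) (by nlinarith),
      pD (-1) (-c) le_rfl le_rfl (by linarith),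
      pC (-c) 0 le_rfl le_rfl (by linarith),
      pB 0 c le_rfl le_rfl hc0.le,
      pA c 1 le_rfl le_rfl (by linarith),
      pE 1 (2-c) le_rfl le_rfl (by linarith),
      pF (2-c) R le_rfl (by nlinarith) (by nlinarith)]
    subst hLd; subst hRd
    nlinarith [mul_nonneg hr0.le hT, hT, hc0, hc, hs2,
      mul_nonneg (by linarith : (0:ℝ) ≤ 3/2 + c^2/4 - r) hT]
  rcases le_or_gt r (3/2 + c + c^2/4) with h8 | h8
  · -- Case H : [L,-1,-c,0,c,1,2-c,2,R]
    rw [← intervalIntegral.integral_add_adjacent_intervals (hi L 2) (hi 2 R),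
      ← intervalIntegral.integral_add_adjacent_intervals (hi L (2-c)) (hi (2-c) 2),
      ← intervalIntegral.integral_add_adjacent_intervals (hi L 1) (hi 1 (2-c)),
      ← intervalIntegral.integral_add_adjacent_intervals (hi L c) (hi c 1),
      ← intervalIntegral.integral_add_adjacent_intervals (hi L 0) (hi 0 c),
      ← intervalIntegral.integral_add_adjacent_intervals (hi L (-c)) (hi (-c) 0),
      ← intervalIntegral.integral_add_adjacent_intervals (hi L (-1)) (hi (-1) (-c)),
      pI L (-1) (by nlinarith) (by nlinarith) (by nlinarith),
      pD (-1) (-c) le_rfl le_rfl (by linarith),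
      pC (-c) 0 le_rfl le_rfl (by linarith),
      pB 0 c le_rfl le_rfl hc0.le,
      pA c 1 le_rfl le_rfl (by linarith),
      pE 1 (2-c) le_rfl le_rfl (by linarith),
      pF (2-c) 2 le_rfl le_rfl (by linarith),
      pG 2 R le_rfl (by nlinarith) (by nlinarith)]
    subst hLd; subst hRd
    nlinarith [sq_nonneg (r - 1 - s), hs2, hT, hc0, hc, mul_pos hc0 hc0]
  · -- Case I : [L,-1,-c,0,c,1,2-c,2,2+c,R]
    rw [← intervalIntegral.integral_add_adjacent_intervals (hi L (2+c)) (hi (2+c) R),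
      ← intervalIntegral.integral_add_adjacent_intervals (hi L 2) (hi 2 (2+c)),
      ← intervalIntegral.integral_add_adjacent_intervals (hi L (2-c)) (hi (2-c) 2),
      ← intervalIntegral.integral_add_adjacent_intervals (hi L 1) (hi 1 (2-c)),
      ← intervalIntegral.integral_add_adjacent_intervals (hi L c) (hi c 1),
      ← intervalIntegral.integral_add_adjacent_intervals (hi L 0) (hi 0 c),
      ← intervalIntegral.integral_add_adjacent_intervals (hi L (-c)) (hi (-c) 0),
      ← intervalIntegral.integral_add_adjacent_intervals (hi L (-1)) (hi (-1) (-c)),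
      pI L (-1) (by nlinarith) (by nlinarith) (by nlinarith),
      pD (-1) (-c) le_rfl le_rfl (by linarith),
      pC (-c) 0 le_rfl le_rfl (by linarith),
      pB 0 c le_rfl le_rfl hc0.le,
      pA c 1 le_rfl le_rfl (by linarith),
      pE 1 (2-c) le_rfl le_rfl (by linarith),
      pF (2-c) 2 le_rfl le_rfl (by linarith),
      pG 2 (2+c) le_rfl le_rfl (by linarith),
      pH (2+c) R le_rfl (by nlinarith) (by nlinarith)]
    subst hLd; subst hRd
    nlinarith [hT, hc0, hc, hs2, mul_nonneg hc0.le hT,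
      mul_nonneg (by linarith : (0:ℝ) ≤ r - (3/2 + c + c^2/4))
        (by linarith [sq_nonneg c] : (0:ℝ) ≤ 1 + 2*c + c^2/2 - 2*s)]
end
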